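/- arXiv:2207.02837 — 2 statements merged into one kernel-verified Lean document; each statement's English description precedes it below -/
import Mathlib

section
/- With notation as above (E invertible, B = E^T - E invertible, Λ = -B⁻¹ skew-symmetric, ⟨x,y⟩ = x^T E y, and writing m* := E^T m, *n := E n), for all a, b, c, d ∈ ℚ^m: Λ(-b* - *a, -d* - *c) = Λ((a+b)*, (c+d)*) + ⟨b, c⟩ - ⟨d, a⟩. -/
open Matrix

/-- With `E` invertible, `B = Eᵀ - E` invertible, `Λ = -B⁻¹` skew-symmetric,
`Λ(u,v) = uᵀ Λ v`, `⟨x,y⟩ = xᵀ E y`, `m* = Eᵀ m`, `*n = E n`, we have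
`Λ(-b* - *a, -d* - *c) = Λ((a+b)*, (c+d)*) + ⟨b,c⟩ - ⟨d,a⟩`. -/
theorem stmt_12 (m : ℕ) (E B Λ : Matrix (Fin m) (Fin m) ℚ)
    (hE : IsUnit E) (hB : B = E.transpose - E) (hBinv : IsUnit B)
    (hΛ : Λ = -B⁻¹) (hskew : Λ.transpose = -Λ) :
    ∀ a b c d : Fin m → ℚ,
      (-(E.transpose.mulVec b) - E.mulVec a) ⬝ᵥ
          Λ.mulVec (-(E.transpose.mulVec d) - E.mulVec c)
        = E.transpose.mulVec (a + b) ⬝ᵥ Λ.mulVec (E.transpose.mulVec (c + d))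
          + b ⬝ᵥ E.mulVec c - d ⬝ᵥ E.mulVec a := by
  intro a b c d
  have hdet : IsUnit B.det := (Matrix.isUnit_iff_isUnit_det _).mp hBinv
  have hΛB : Λ * B = -1 := by
    rw [hΛ, neg_mul, Matrix.nonsing_inv_mul _ hdet]
  have hBΛ : B * Λ = -1 := by
    rw [hΛ, mul_neg, Matrix.mul_nonsing_inv _ hdet]
  have hBT : B.transpose = -B := by rw [hB, transpose_sub, transpose_transpose]; abel
  have gT : ∀ (M : Matrix (Fin m) (Fin m) ℚ) (x z : Fin m → ℚ),
      (M.mulVec x) ⬝ᵥ z = x ⬝ᵥ (M.transpose.mulVec z) := by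
    intro M x z
    rw [Matrix.dotProduct_mulVec, Matrix.vecMul_transpose]
  have f1 : ∀ x y : Fin m → ℚ, x ⬝ᵥ Λ.mulVec (B.mulVec y) = -(x ⬝ᵥ y) := by
    intro x y
    rw [Matrix.mulVec_mulVec, hΛB, Matrix.neg_mulVec, Matrix.one_mulVec, dotProduct_neg]
  have f2 : ∀ x y : Fin m → ℚ, (B.mulVec x) ⬝ᵥ Λ.mulVec y = x ⬝ᵥ y := by
    intro x y
    rw [gT, hBT, Matrix.neg_mulVec, dotProduct_neg, Matrix.mulVec_mulVec, hBΛ,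
      Matrix.neg_mulVec, Matrix.one_mulVec, dotProduct_neg, neg_neg]
  have hu1 : E.transpose.mulVec (a + b)
      = (E.transpose.mulVec b + E.mulVec a) + B.mulVec a := by
    rw [hB, Matrix.mulVec_add, Matrix.sub_mulVec]; abel
  have hu2 : E.transpose.mulVec (c + d)
      = (E.transpose.mulVec d + E.mulVec c) + B.mulVec c := by
    rw [hB, Matrix.mulVec_add, Matrix.sub_mulVec]; abel
  have hL : (-(E.transpose.mulVec b) - E.mulVec a) ⬝ᵥ
      Λ.mulVec (-(E.transpose.mulVec d) - E.mulVec c)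
      = (E.transpose.mulVec b + E.mulVec a) ⬝ᵥ
        Λ.mulVec (E.transpose.mulVec d + E.mulVec c) := by
    have h1 : -(E.transpose.mulVec b) - E.mulVec a = -(E.transpose.mulVec b + E.mulVec a) := by abel
    have h2 : -(E.transpose.mulVec d) - E.mulVec c = -(E.transpose.mulVec d + E.mulVec c) := by abel
    rw [h1, h2, Matrix.mulVec_neg, dotProduct_neg, neg_dotProduct, neg_neg]
  rw [hL, hu1, hu2]
  simp only [Matrix.mulVec_add, dotProduct_add, add_dotProduct, f1, f2]
  have g1 : (E.transpose.mulVec b) ⬝ᵥ c = b ⬝ᵥ E.mulVec c := by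
    rw [gT, transpose_transpose]
  have g2 : a ⬝ᵥ (E.transpose.mulVec d) = d ⬝ᵥ E.mulVec a := by
    rw [← gT, dotProduct_comm]
  have gBa : B.mulVec a ⬝ᵥ c = a ⬝ᵥ E.mulVec c - E.mulVec a ⬝ᵥ c := by
    rw [hB, Matrix.sub_mulVec, sub_dotProduct, gT E.transpose, transpose_transpose]
  rw [g1, g2, gBa]
  ring
end

section
/- Let 0 → N → N ⊕ M → M → 0 be the split exact sequence of modules over a finite ring (or objects of a finitary abelian category over a finite field). Then for any class e in the Grothendieck group, |Gr_e(M ⊕ N)| = ∑ q^{dim Hom(B, C)} g^M_{A,B} g^N_{C,D}, where the sum is over isomorphism classes A, B, C, D with [B] + [D] = e, g^M_{A,B} is the number of submodules B' ⊆ M with B' ≅ B and M/B' ≅ A, q = |k|, and Gr_e(X) denotes the set of submodules of X of class e. -/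
section Aux

variable {A : Type} [Ring A] {M N : Type} [AddCommGroup M] [AddCommGroup N]
  [Module A M] [Module A N]

/-- The submodule of `M × N` forming the "graph" of a linear map `B → N ⧸ D`. -/
def graphSub (B : Submodule A M) (D : Submodule A N) (f : B →ₗ[A] N ⧸ D) :
    Submodule A (M × N) where
  carrier := {p | ∃ h : p.1 ∈ B, (Submodule.Quotient.mk p.2 : N ⧸ D) = f ⟨p.1, h⟩}
  zero_mem' := ⟨B.zero_mem, by
    show (Submodule.Quotient.mk (0 : N) : N ⧸ D) = _
    rw [Submodule.Quotient.mk_zero]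
    exact (map_zero f).symm.trans (congrArg f (Subtype.ext rfl))⟩
  add_mem' := by
    rintro ⟨a1, a2⟩ ⟨b1, b2⟩ ⟨ha, hfa⟩ ⟨hb, hfb⟩
    refine ⟨B.add_mem ha hb, ?_⟩
    show (Submodule.Quotient.mk (a2 + b2) : N ⧸ D) = _
    rw [Submodule.Quotient.mk_add, hfa, hfb, ← map_add]
    exact congrArg f (Subtype.ext rfl)
  smul_mem' := by
    rintro c ⟨a1, a2⟩ ⟨ha, hfa⟩
    refine ⟨B.smul_mem c ha, ?_⟩
    show (Submodule.Quotient.mk (c • a2) : N ⧸ D) = _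
    rw [Submodule.Quotient.mk_smul, hfa, ← map_smul]
    exact congrArg f (Subtype.ext rfl)

lemma mem_graphSub {B : Submodule A M} {D : Submodule A N} {f : B →ₗ[A] N ⧸ D}
    {p : M × N} :
    p ∈ graphSub B D f ↔ ∃ h : p.1 ∈ B, (Submodule.Quotient.mk p.2 : N ⧸ D) = f ⟨p.1, h⟩ :=
  Iff.rfl

lemma graphSub_map_fst (B : Submodule A M) (D : Submodule A N) (f : B →ₗ[A] N ⧸ D) :
    (graphSub B D f).map (LinearMap.fst A M N) = B := by
  ext m
  simp only [Submodule.mem_map, LinearMap.fst_apply]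
  constructor
  · rintro ⟨⟨m', n⟩, ⟨h, _⟩, rfl⟩; exact h
  · intro hm
    obtain ⟨n, hn⟩ := Submodule.Quotient.mk_surjective D (f ⟨m, hm⟩)
    exact ⟨(m, n), ⟨hm, hn⟩, rfl⟩

lemma graphSub_comap_inr (B : Submodule A M) (D : Submodule A N) (f : B →ₗ[A] N ⧸ D) :
    (graphSub B D f).comap (LinearMap.inr A M N) = D := by
  ext n
  simp only [Submodule.mem_comap, LinearMap.inr_apply]
  constructor
  · rintro ⟨h, hf⟩
    have h0 : f ⟨(0 : M), h⟩ = 0 := by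
      have : (⟨(0 : M), h⟩ : B) = 0 := rfl
      rw [this, map_zero]
    rw [h0] at hf
    exact (Submodule.Quotient.mk_eq_zero D).mp hf
  · intro hn
    refine ⟨B.zero_mem, ?_⟩
    have h0 : f ⟨(0 : M), B.zero_mem⟩ = 0 := by
      have : (⟨(0 : M), B.zero_mem⟩ : B) = 0 := rfl
      rw [this, map_zero]
    rw [h0]
    exact (Submodule.Quotient.mk_eq_zero D).mpr hn

lemma quot_unique {W : Submodule A (M × N)} {D : Submodule A N}
    (hD : W.comap (LinearMap.inr A M N) = D) {m : M} {n n' : N}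
    (h1 : (m, n) ∈ W) (h2 : (m, n') ∈ W) :
    (Submodule.Quotient.mk n : N ⧸ D) = Submodule.Quotient.mk n' := by
  rw [Submodule.Quotient.eq]
  have hmem : ((0 : M), n - n') ∈ W := by
    have := W.sub_mem h1 h2
    simpa using this
  rw [← hD]
  exact hmem

lemma graphSub_injective (B : Submodule A M) (D : Submodule A N) :
    Function.Injective (graphSub B D) := by
  intro f f' h
  apply LinearMap.ext
  intro b
  obtain ⟨n, hn⟩ := Submodule.Quotient.mk_surjective D (f b)
  have hmem : (b.1, n) ∈ graphSub B D f := ⟨b.2, by rw [hn]⟩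
  rw [h] at hmem
  obtain ⟨h', hf'⟩ := hmem
  have : (⟨b.1, h'⟩ : B) = b := Subtype.ext rfl
  rw [this] at hf'
  rw [← hn, hf']

lemma graphSub_surjective {B : Submodule A M} {D : Submodule A N} {W : Submodule A (M × N)}
    (hB : W.map (LinearMap.fst A M N) = B) (hD : W.comap (LinearMap.inr A M N) = D) :
    ∃ f : B →ₗ[A] N ⧸ D, graphSub B D f = W := by
  have hmem : ∀ b : B, ∃ n, ((b : M), n) ∈ W := by
    intro b
    have hb : (b : M) ∈ W.map (LinearMap.fst A M N) := hB ▸ b.2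
    obtain ⟨⟨m, n⟩, hw, h⟩ := hb
    refine ⟨n, ?_⟩
    have : m = (b : M) := h
    rwa [this] at hw
  choose g hg using hmem
  refine ⟨⟨⟨fun b => Submodule.Quotient.mk (g b), ?_⟩, ?_⟩, ?_⟩
  · intro a b
    rw [← Submodule.Quotient.mk_add]
    refine quot_unique hD (hg (a + b)) ?_
    have := W.add_mem (hg a) (hg b)
    simpa using this
  · intro c a
    rw [← Submodule.Quotient.mk_smul]
    refine quot_unique hD (hg (c • a)) ?_
    have := W.smul_mem c (hg a)
    simpa using this
  · ext ⟨m, n⟩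
    simp only [mem_graphSub]
    constructor
    · rintro ⟨h, hf⟩
      have hdiff : n - g ⟨m, h⟩ ∈ D := by
        rw [← Submodule.Quotient.eq]
        exact hf
      have h0 : ((0 : M), n - g ⟨m, h⟩) ∈ W := by
        rw [← hD] at hdiff
        exact hdiff
      have := W.add_mem h0 (hg ⟨m, h⟩)
      simpa using this
    · intro hw
      have h : m ∈ B := by
        rw [← hB]
        exact ⟨(m, n), hw, rfl⟩
      exact ⟨h, quot_unique hD hw (hg ⟨m, h⟩)⟩

/-- The fiber of the map `W ↦ (π₁(W), W ∩ N)` over `(B, D)` is in bijection with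
`Hom(B, N ⧸ D)`. -/
noncomputable def fiberEquiv (B : Submodule A M) (D : Submodule A N) :
    (B →ₗ[A] N ⧸ D) ≃
      {W : Submodule A (M × N) //
        W.map (LinearMap.fst A M N) = B ∧ W.comap (LinearMap.inr A M N) = D} :=
  Equiv.ofBijective
    (fun f => ⟨graphSub B D f, graphSub_map_fst B D f, graphSub_comap_inr B D f⟩)
    ⟨fun f f' h => graphSub_injective B D (congrArg Subtype.val h),
     fun ⟨W, hB, hD⟩ => by
      obtain ⟨f, hf⟩ := graphSub_surjective hB hD
      exact ⟨f, Subtype.ext hf⟩⟩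

end Aux

/-- Hubery's counting lemma for the split exact sequence `0 → N → M ⊕ N → M → 0` over a
finite ring: for any Grothendieck-group-style class function (`clP`, `clM`, `clN`,
additive with respect to the canonical sub/quotient decomposition of a submodule
`W ≤ M × N`, i.e. `0 → W ∩ N → W → π(W) → 0`) and any class `e`,
`|Gr_e(M ⊕ N)| = ∑_{B ≤ M, D ≤ N, [B]+[D]=e} |Hom(B, N/D)|`.
(The right-hand side equals `∑ q^{dim Hom(B,C)} g^M_{A,B} g^N_{C,D}` after grouping
submodules `B ≤ M`, `D ≤ N` by the isomorphism classes of `(M/B', B')`, `(N/D', D')`.) -/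
theorem stmt_16 (A : Type) [Ring A] [Fintype A]
    (M N : Type) [AddCommGroup M] [AddCommGroup N] [Module A M] [Module A N]
    [Fintype M] [Fintype N]
    (G : Type) [AddCommMonoid G]
    (clP : Submodule A (M × N) → G) (clM : Submodule A M → G)
    (clN : Submodule A N → G)
    (hadd : ∀ W : Submodule A (M × N),
      clP W = clM (W.map (LinearMap.fst A M N)) + clN (W.comap (LinearMap.inr A M N)))
    (e : G) :
    Nat.card {W : Submodule A (M × N) // clP W = e} =
      ∑ᶠ (B : Submodule A M) (D : Submodule A N) (_ : clM B + clN D = e),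
        Nat.card (B →ₗ[A] N ⧸ D) := by
  classical
  have hfinM : Finite (Submodule A M) :=
    Finite.of_injective (fun S => (S : Set M)) SetLike.coe_injective
  have hfinN : Finite (Submodule A N) :=
    Finite.of_injective (fun S => (S : Set N)) SetLike.coe_injective
  have hfinP : Finite (Submodule A (M × N)) :=
    Finite.of_injective (fun S => (S : Set (M × N))) SetLike.coe_injective
  letI : Fintype (Submodule A M) := Fintype.ofFinite _
  letI : Fintype (Submodule A N) := Fintype.ofFinite _
  letI : Fintype (Submodule A (M × N)) := Fintype.ofFinite _
  -- rewrite RHS as finite sums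
  simp only [finsum_eq_if, finsum_eq_sum_of_fintype]
  -- rewrite LHS via fiberwise counting
  rw [Nat.card_eq_fintype_card, Fintype.card_subtype]
  rw [Finset.card_eq_sum_card_fiberwise
    (f := fun W : Submodule A (M × N) =>
      (W.map (LinearMap.fst A M N), W.comap (LinearMap.inr A M N)))
    (t := Finset.univ) (fun _ _ => Finset.mem_univ _)]
  rw [Fintype.sum_prod_type]
  refine Finset.sum_congr rfl fun B _ => Finset.sum_congr rfl fun D _ => ?_
  by_cases h : clM B + clN D = e
  · rw [if_pos h]
    have hset : ((Finset.univ.filter fun W : Submodule A (M × N) => clP W = e).filter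
        fun W => (W.map (LinearMap.fst A M N), W.comap (LinearMap.inr A M N)) = (B, D)) =
        Finset.univ.filter fun W : Submodule A (M × N) =>
          W.map (LinearMap.fst A M N) = B ∧ W.comap (LinearMap.inr A M N) = D := by
      ext W
      simp only [Finset.mem_filter, Finset.mem_univ, true_and, Prod.mk.injEq]
      constructor
      · rintro ⟨_, h1, h2⟩
        exact ⟨h1, h2⟩
      · rintro ⟨h1, h2⟩
        exact ⟨by rw [hadd W, h1, h2]; exact h, h1, h2⟩
    rw [hset, ← Fintype.card_subtype, ← Nat.card_eq_fintype_card,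
      ← Nat.card_congr (fiberEquiv B D)]
  · rw [if_neg h]
    rw [Finset.card_eq_zero]
    ext W
    simp only [Finset.mem_filter, Finset.mem_univ, true_and, Prod.mk.injEq,
      Finset.notMem_empty, iff_false, not_and]
    rintro hcl h1 h2
    exact h (by rw [← h1, ← h2, ← hadd W, hcl])
end
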